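/- arXiv:1712.03492 — 3 statements merged into one kernel-verified Lean document; each statement's English description precedes it below -/
import Mathlib

section
/- Let P be an additive category and let [α] : (A ← R_A) → (B ← R_B) be a morphism of the Freyd category A(P), represented by α : A → B. Then the morphism [id_B] : (B ← R_B) → (B ← R_B ⊕ A), where the structure morphism R_B ⊕ A → B of the target object has components ρ_B and α, is a cokernel of [α] in A(P). In particular, for every additive category P the Freyd category A(P) has cokernels. -/
open CategoryTheory Limits Opposite

set_option linter.unusedSectionVars false

universe v u

/-- An object of the Freyd category of `P`: a morphism `ρ : R ⟶ A` of `P`,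
thought of as "the object `A` with relations `R`". -/
structure FreydObj (P : Type u) [CategoryTheory.Category.{v} P] : Type max u v where
  R : P
  A : P
  ρ : R ⟶ A

namespace FreydObj

variable {P : Type u} [Category.{v} P] [Preadditive P]

/-- The "pre-Freyd" category: morphisms are morphism data admitting a witness;
the Freyd category is its quotient by the relation of having a homotopy `λ`. -/
instance : Category.{v} (FreydObj P) where
  Hom X Y := {α : X.A ⟶ Y.A // ∃ w : X.R ⟶ Y.R, X.ρ ≫ α = w ≫ Y.ρ}
  id X := ⟨𝟙 X.A, ⟨𝟙 X.R, by simp⟩⟩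
  comp {X Y Z} f g := ⟨f.1 ≫ g.1, by
    obtain ⟨w, hw⟩ := f.2
    obtain ⟨v, hv⟩ := g.2
    refine ⟨w ≫ v, ?_⟩
    rw [← Category.assoc, hw, Category.assoc, hv, Category.assoc]⟩
  id_comp f := Subtype.ext (Category.id_comp _)
  comp_id f := Subtype.ext (Category.comp_id _)
  assoc f g h := Subtype.ext (Category.assoc _ _ _)

@[simp] lemma comp_val {X Y Z : FreydObj P} (f : X ⟶ Y) (g : Y ⟶ Z) :
    (f ≫ g).1 = f.1 ≫ g.1 := rfl

@[simp] lemma id_val (X : FreydObj P) : (𝟙 X : X ⟶ X).1 = 𝟙 X.A := rfl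

instance homAdd (X Y : FreydObj P) : Add (X ⟶ Y) :=
  ⟨fun f g => ⟨f.1 + g.1, by
    obtain ⟨w, hw⟩ := f.2
    obtain ⟨v, hv⟩ := g.2
    exact ⟨w + v, by rw [Preadditive.comp_add, Preadditive.add_comp, hw, hv]⟩⟩⟩

instance homZero (X Y : FreydObj P) : Zero (X ⟶ Y) := ⟨⟨0, ⟨0, by simp⟩⟩⟩

instance homNeg (X Y : FreydObj P) : Neg (X ⟶ Y) :=
  ⟨fun f => ⟨-f.1, by
    obtain ⟨w, hw⟩ := f.2
    exact ⟨-w, by rw [Preadditive.comp_neg, Preadditive.neg_comp, hw]⟩⟩⟩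

@[simp] lemma add_val {X Y : FreydObj P} (f g : X ⟶ Y) : (f + g).1 = f.1 + g.1 := rfl
@[simp] lemma zero_val (X Y : FreydObj P) : (0 : X ⟶ Y).1 = 0 := rfl
@[simp] lemma neg_val {X Y : FreydObj P} (f : X ⟶ Y) : (-f).1 = -f.1 := rfl

instance homAddCommGroup (X Y : FreydObj P) : AddCommGroup (X ⟶ Y) where
  add_assoc f g h := Subtype.ext (add_assoc f.1 g.1 h.1)
  zero_add f := Subtype.ext (zero_add f.1)
  add_zero f := Subtype.ext (add_zero f.1)
  add_comm f g := Subtype.ext (add_comm f.1 g.1)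
  neg_add_cancel f := Subtype.ext (neg_add_cancel f.1)
  nsmul := nsmulRec
  zsmul := zsmulRec

instance : Preadditive (FreydObj P) where
  add_comp _ _ _ f f' g := Subtype.ext (by simp [Preadditive.add_comp])
  comp_add _ _ _ f g g' := Subtype.ext (by simp [Preadditive.comp_add])

end FreydObj

/-- Two morphism data are identified in the Freyd category iff their difference
factors through the relations of the target. -/
def freydRel (P : Type u) [Category.{v} P] [Preadditive P] : HomRel (FreydObj P) :=
  fun {X Y} f g => ∃ l : X.A ⟶ Y.R, l ≫ Y.ρ = f.1 - g.1

instance freydRel_congruence (P : Type u) [Category.{v} P] [Preadditive P] :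
    Congruence (freydRel P) where
  equivalence :=
    { refl := fun f => ⟨0, by simp⟩
      symm := fun {f g} h => by
        obtain ⟨l, hl⟩ := h
        exact ⟨-l, by rw [Preadditive.neg_comp, hl]; abel⟩
      trans := fun {f g h} h₁ h₂ => by
        obtain ⟨l₁, hl₁⟩ := h₁
        obtain ⟨l₂, hl₂⟩ := h₂
        exact ⟨l₁ + l₂, by rw [Preadditive.add_comp, hl₁, hl₂]; abel⟩ }
  comp_left := by
    intro _ _ _ f _ _ h
    obtain ⟨l, hl⟩ := h
    exact ⟨f.1 ≫ l, by rw [Category.assoc, hl, Preadditive.comp_sub]; rfl⟩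
  comp_right g h := by
    obtain ⟨l, hl⟩ := h
    obtain ⟨w, hw⟩ := g.2
    exact ⟨l ≫ w, by
      rw [Category.assoc, ← hw, ← Category.assoc, hl, Preadditive.sub_comp]; rfl⟩

/-- The Freyd category of an additive category `P`. -/
abbrev Freyd (P : Type u) [Category.{v} P] [Preadditive P] :=
  CategoryTheory.Quotient (freydRel P)

noncomputable instance (P : Type u) [Category.{v} P] [Preadditive P] :
    Preadditive (Freyd P) :=
  CategoryTheory.Quotient.preadditive (freydRel P) (by
    rintro X Y f₁ f₂ g₁ g₂ ⟨l₁, hl₁⟩ ⟨l₂, hl₂⟩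
    exact ⟨l₁ + l₂, by
      rw [Preadditive.add_comp, hl₁, hl₂]
      show _ = (f₁ + g₁).1 - (f₂ + g₂).1
      simp only [FreydObj.add_val]
      abel⟩)

/-- The projection functor from the pre-Freyd category to the Freyd category. -/
abbrev Freyd.Q (P : Type u) [Category.{v} P] [Preadditive P] :
    FreydObj P ⥤ Freyd P :=
  CategoryTheory.Quotient.functor (freydRel P)

/-- `P` has weak kernels. -/
def HasWeakKernels (P : Type u) [Category.{v} P] [Preadditive P] : Prop :=
  ∀ ⦃A B : P⦄ (f : A ⟶ B), ∃ (K : P) (κ : K ⟶ A), κ ≫ f = 0 ∧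
    ∀ ⦃T : P⦄ (τ : T ⟶ A), τ ≫ f = 0 → ∃ u : T ⟶ K, u ≫ κ = τ


section Aux

variable {P : Type u} [Category.{v} P] [Preadditive P]

lemma Freyd.map_eq {X Y : FreydObj P} (f g : X ⟶ Y)
    (l : X.A ⟶ Y.R) (hl : l ≫ Y.ρ = f.1 - g.1) :
    (Freyd.Q P).map f = (Freyd.Q P).map g := by
  rw [Quotient.functor_map_eq_iff]
  exact ⟨l, hl⟩

lemma Freyd.map_eq_iff {X Y : FreydObj P} (f g : X ⟶ Y) :
    (Freyd.Q P).map f = (Freyd.Q P).map g ↔ freydRel P f g :=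
  Quotient.functor_map_eq_iff _ _ _

lemma Freyd.zero_eq (X Y : FreydObj P) :
    (0 : (Freyd.Q P).obj X ⟶ (Freyd.Q P).obj Y) = (Freyd.Q P).map 0 := rfl

variable [HasBinaryBiproducts P]

/-- The cokernel object. -/
@[simp] noncomputable def freydCokObj {X Y : FreydObj P} (f : X ⟶ Y) : FreydObj P :=
  ⟨Y.R ⊞ X.A, Y.A, biprod.desc Y.ρ f.1⟩

/-- The projection. -/
@[simp] noncomputable def freydCokπ {X Y : FreydObj P} (f : X ⟶ Y) : Y ⟶ freydCokObj f :=
  ⟨𝟙 Y.A, ⟨biprod.inl, by simp [freydCokObj]⟩⟩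

/-- Descent data. -/
noncomputable def freydDesc {X Y : FreydObj P} (f : X ⟶ Y) {Z : FreydObj P}
    (g : Y ⟶ Z) (l : X.A ⟶ Z.R) (hl : l ≫ Z.ρ = f.1 ≫ g.1) :
    freydCokObj f ⟶ Z :=
  ⟨g.1, ⟨biprod.desc g.2.choose l, by
    apply biprod.hom_ext' <;>
      simp [freydCokObj, ← g.2.choose_spec, hl]⟩⟩

lemma freyd_cok_main (X Y : FreydObj P) (f : X ⟶ Y) :
    ∃ w : (Freyd.Q P).map f ≫ (Freyd.Q P).map (freydCokπ f) = 0,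
      Nonempty (IsColimit (CokernelCofork.ofπ ((Freyd.Q P).map (freydCokπ f)) w)) := by
  have w : (Freyd.Q P).map f ≫ (Freyd.Q P).map (freydCokπ f) = 0 := by
    rw [← Functor.map_comp, Freyd.zero_eq]
    refine Freyd.map_eq _ _ biprod.inr ?_
    simp [freydCokObj, freydCokπ]
    exact (sub_zero _).symm
  refine ⟨w, ?_⟩
  -- descent: given `g' : Q.obj Y ⟶ Z'` with `Q.map f ≫ g' = 0`, construct the factorization
  have desc : ∀ (Z' : Freyd P) (g' : (Freyd.Q P).obj Y ⟶ Z'),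
      (Freyd.Q P).map f ≫ g' = 0 →
      ∃ d : (Freyd.Q P).obj (freydCokObj f) ⟶ Z',
        (Freyd.Q P).map (freydCokπ f) ≫ d = g' := by
    intro Z' g' hg'
    obtain ⟨g₀, rfl⟩ := (Freyd.Q P).map_surjective
      (show (Freyd.Q P).obj Y ⟶ (Freyd.Q P).obj Z'.as from g')
    rw [← Functor.map_comp, Freyd.zero_eq, Freyd.map_eq_iff] at hg'
    obtain ⟨l, hl⟩ := hg'
    refine ⟨(Freyd.Q P).map (freydDesc f g₀ l (by simpa using hl)), ?_⟩
    rw [← Functor.map_comp]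
    congr 1
    exact Subtype.ext (Category.id_comp _)
  choose d hd using desc
  have uniq : ∀ (Z' : Freyd P) (g' : (Freyd.Q P).obj Y ⟶ Z')
      (hg' : (Freyd.Q P).map f ≫ g' = 0)
      (m : (Freyd.Q P).obj (freydCokObj f) ⟶ Z'),
      (Freyd.Q P).map (freydCokπ f) ≫ m = g' → m = d Z' g' hg' := by
    intro Z' g' hg' m hm
  -- uniqueness
    obtain ⟨m₀, rfl⟩ := (Freyd.Q P).map_surjective
      (show (Freyd.Q P).obj (freydCokObj f) ⟶ (Freyd.Q P).obj Z'.as from m)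
    obtain ⟨d₀, hd₀⟩ := (Freyd.Q P).map_surjective
      (X := freydCokObj f) (Y := Z'.as) (d Z' g' hg')
    rw [← hd₀]
    have : (Freyd.Q P).map (freydCokπ f ≫ m₀) = (Freyd.Q P).map (freydCokπ f ≫ d₀) := by
      rw [Functor.map_comp, Functor.map_comp, hm, hd₀, hd Z' g' hg']
    rw [Freyd.map_eq_iff] at this
    obtain ⟨l, hl⟩ := this
    rw [Freyd.map_eq_iff]
    refine ⟨l, ?_⟩
    exact hl.trans (by show 𝟙 Y.A ≫ m₀.1 - 𝟙 Y.A ≫ d₀.1 = m₀.1 - d₀.1; simp; rfl)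
  exact ⟨CokernelCofork.IsColimit.ofπ _ w (fun {Z'} g' hg' => d Z' g' hg')
    (fun {Z'} g' hg' => hd Z' g' hg') (fun {Z'} g' hg' m hm => uniq Z' g' hg' m hm)⟩

end Aux

/-- for a morphism `[α] : (A ← R_A) ⟶ (B ← R_B)` of the Freyd category of an
additive category `P`, the morphism `[𝟙 B] : (B ← R_B) ⟶ (B ← R_B ⊕ A)` (where the
structure morphism of the target has components `ρ_B` and `α`) is a cokernel of `[α]`.
In particular `A(P)` has cokernels. -/
theorem freyd_cokernel (P : Type u) [Category.{v} P] [Preadditive P] [HasBinaryBiproducts P]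
    (X Y : FreydObj P) (f : X ⟶ Y) :
    (let Y' : FreydObj P := ⟨Y.R ⊞ X.A, Y.A, biprod.desc Y.ρ f.1⟩
     let π : Y ⟶ Y' := ⟨𝟙 Y.A, ⟨biprod.inl, by simp [Y']⟩⟩
     ∃ w : (Freyd.Q P).map f ≫ (Freyd.Q P).map π = 0,
       Nonempty (IsColimit (CokernelCofork.ofπ ((Freyd.Q P).map π) w))) ∧
    HasCokernels (Freyd P) := by
  constructor
  · obtain ⟨w, ⟨h⟩⟩ := freyd_cok_main X Y f
    exact ⟨w, ⟨h⟩⟩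
  · constructor
    intro QX QY f'
    obtain ⟨f₀, hf₀⟩ := (Freyd.Q P).map_surjective
      (show (Freyd.Q P).obj QX.as ⟶ (Freyd.Q P).obj QY.as from f')
    obtain ⟨w, ⟨h⟩⟩ := freyd_cok_main QX.as QY.as f₀
    rw [show f' = (Freyd.Q P).map f₀ from hf₀.symm]
    exact HasColimit.mk ⟨_, h⟩
end

section
/- Let k be a field, G a group, and M a subgroup of G. Let I be the right ideal of the group algebra k[G] generated by the set {1 − m : m ∈ M}. Then for every g ∈ G one has g ∈ M if and only if 1 − g ∈ I. -/
open scoped Classical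

private lemma aux_mul_single (k : Type*) [Field k] (G : Type*) [Group G]
    (f : MonoidAlgebra k G) (h : G) (c : k) :
    f * MonoidAlgebra.single h c = c • MonoidAlgebra.ofCoeff (Finsupp.mapDomain (· * h) f.coeff) := by
  apply MonoidAlgebra.coeff_injective
  ext x
  rw [MonoidAlgebra.coeff_mul_single_apply]
  have hinj : Function.Injective (fun a : G => a * h) := fun a b hab => by
    simpa using mul_right_cancel (hab : a * h = b * h)
  have : Finsupp.mapDomain (· * h) f.coeff ((x * h⁻¹) * h) = f.coeff (x * h⁻¹) :=
    Finsupp.mapDomain_apply hinj f.coeff _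
  simp only [MonoidAlgebra.coeff_smul_apply, MonoidAlgebra.coeff_ofCoeff]
  rw [show x = (x * h⁻¹) * h by group, this, mul_inv_cancel_right, smul_eq_mul, mul_comm]

/-- let `k` be a field, `G` a group and `M ≤ G` a subgroup.  Let `I` be the
right ideal of the group algebra `k[G]` generated by the elements `1 - m` for `m ∈ M`
(i.e. the `k[G]ᵐᵒᵖ`-submodule of `k[G]` spanned by them).  Then for every `g ∈ G` we have
`g ∈ M` if and only if `1 - g ∈ I`. -/
theorem mem_subgroup_iff_one_sub_mem_right_ideal
    (k : Type*) [Field k] (G : Type*) [Group G] (M : Subgroup G) (g : G) :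
    g ∈ M ↔
      (1 - MonoidAlgebra.of k G g) ∈
        Submodule.span (MonoidAlgebra k G)ᵐᵒᵖ
          ((fun m => 1 - MonoidAlgebra.of k G m) '' (M : Set G)) := by
  constructor
  · intro hg
    exact Submodule.subset_span ⟨g, hg, rfl⟩
  · intro hmem
    set Q := Quotient (QuotientGroup.rightRel M)
    set q : G → Q := Quotient.mk'' with hq
    set φ : MonoidAlgebra k G →ₗ[k] (Q →₀ k) :=
      (Finsupp.lmapDomain k k q) ∘ₗ (MonoidAlgebra.coeffLinearEquiv k).toLinearMap with hφ
    have hsingle : ∀ a : G, φ (MonoidAlgebra.single a (1 : k)) =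
        Finsupp.single (q a) (1 : k) := fun a =>
      Finsupp.mapDomain_single
    -- key: φ vanishes on the span
    have hker : ∀ x ∈ Submodule.span (MonoidAlgebra k G)ᵐᵒᵖ
        ((fun m => 1 - MonoidAlgebra.of k G m) '' (M : Set G)), φ x = 0 := by
      intro x hx
      induction hx using Submodule.span_induction with
      | mem x hx =>
        obtain ⟨m, hm, rfl⟩ := hx
        show φ (1 - MonoidAlgebra.of k G m) = 0
        have h1 : (1 : MonoidAlgebra k G) = MonoidAlgebra.single 1 1 := rfl
        have h2 : MonoidAlgebra.of k G m = MonoidAlgebra.single m 1 := rfl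
        have hqm : q m = q 1 := Quotient.sound' (by
          rw [QuotientGroup.rightRel_apply]; simpa using hm)
        rw [h1, h2, map_sub, hsingle, hsingle, hqm, sub_self]
      | zero => simp
      | add x y _ _ hx hy => simp [map_add, hx, hy]
      | smul c x _ hx =>
        -- c • x = x * c.unop
        have hsmul : c • x = x * c.unop := rfl
        rw [hsmul]
        -- induct on c.unop
        induction c.unop using MonoidAlgebra.induction with
        | zero => simp
        | single_add h cc f _ _ hf =>
          rw [mul_add, map_add, hf, add_zero]
          rw [aux_mul_single, map_smul]
          -- φ (mapDomain (· * h) x) = 0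
          have key : Finsupp.mapDomain q (Finsupp.mapDomain (· * h) x.coeff) = 0 := by
            rw [← Finsupp.mapDomain_comp]
            have hcomm : q ∘ (· * h) =
                (Quotient.map' (· * h) (fun a b hab => by
                  rw [QuotientGroup.rightRel_apply] at hab ⊢
                  simpa [mul_assoc] using hab)) ∘ q := by
              funext a; rfl
            rw [hcomm, Finsupp.mapDomain_comp]
            have : Finsupp.mapDomain q x.coeff = 0 := hx
            rw [this, Finsupp.mapDomain_zero]
          have : φ (MonoidAlgebra.ofCoeff (Finsupp.mapDomain (fun a => a * h) x.coeff)) = 0 := key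
          rw [this, smul_zero]
    have h0 : φ (1 - MonoidAlgebra.of k G g) = 0 := hker _ hmem
    have h1 : (1 : MonoidAlgebra k G) = MonoidAlgebra.single 1 1 := rfl
    have h2 : MonoidAlgebra.of k G g = MonoidAlgebra.single g 1 := rfl
    rw [h1, h2, map_sub, hsingle, hsingle, sub_eq_zero] at h0
    have hq1g : q 1 = q g := Finsupp.single_left_injective (one_ne_zero (α := k)) h0
    have := Quotient.exact' hq1g.symm
    rw [QuotientGroup.rightRel_apply] at this
    simpa using this
end

section
/- Let k be a field and let R be the quotient of the polynomial ring k[z, x_0, x_1, x_2, …] in one variable z and countably many variables x_i by the ideal generated by all products z·x_i (i ∈ ℕ). Then the kernel of the R-linear endomorphism of R given by multiplication by (the image of) z equals the ideal of R generated by the images of the x_i (i ∈ ℕ), and this ideal is not finitely generated as an R-module. In particular, R is not a coherent ring. -/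
set_option synthInstance.maxHeartbeats 1000000
set_option maxHeartbeats 1000000

/-- The polynomial ring `k[z, x₀, x₁, …]`, where `z` is the variable indexed by `none`
and `xᵢ` is the variable indexed by `some i`. -/
abbrev Stmt13.Poly (k : Type) [Field k] : Type := MvPolynomial (Option ℕ) k

/-- The ideal `⟨z·xᵢ ∣ i ∈ ℕ⟩`. -/
noncomputable abbrev Stmt13.I (k : Type) [Field k] : Ideal (Stmt13.Poly k) :=
  Ideal.span {p : Stmt13.Poly k |
    ∃ i : ℕ, p = MvPolynomial.X none * MvPolynomial.X (some i)}

/-- The ring `R = k[z, x₀, x₁, …] / ⟨z·xᵢ ∣ i ∈ ℕ⟩`. -/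
abbrev Stmt13.R (k : Type) [Field k] : Type := Stmt13.Poly k ⧸ Stmt13.I k

/-- The image of `z` in `R`. -/
noncomputable def Stmt13.z (k : Type) [Field k] : Stmt13.R k :=
  Ideal.Quotient.mk (Stmt13.I k) (MvPolynomial.X none)

/-- The image of `xᵢ` in `R`. -/
noncomputable def Stmt13.x (k : Type) [Field k] (i : ℕ) : Stmt13.R k :=
  Ideal.Quotient.mk (Stmt13.I k) (MvPolynomial.X (some i))

namespace Stmt13Aux

open MvPolynomial Stmt13

variable (k : Type) [Field k]

/-- The ideal generated by the `xᵢ` in the polynomial ring. -/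
noncomputable abbrev J : Ideal (Stmt13.Poly k) :=
  Ideal.span (Set.range (fun i : ℕ => (X (some i) : Stmt13.Poly k)))

/-- Kill all the `xᵢ`, keep `z`. -/
noncomputable def φ : Stmt13.Poly k →ₐ[k] Stmt13.Poly k :=
  aeval (fun j => j.elim (X none) (fun _ => 0))

lemma φ_z : φ k (X none) = X none := by simp [φ]

lemma φ_x (i : ℕ) : φ k (X (some i)) = 0 := by simp [φ]

lemma φ_I {p : Stmt13.Poly k} (hp : p ∈ I k) : φ k p = 0 := by
  refine Submodule.span_induction ?_ ?_ ?_ ?_ hp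
  · rintro q ⟨i, rfl⟩
    simp [φ_x]
  · simp
  · intro a b _ _ ha hb; simp [ha, hb]
  · intro a b _ hb; simp [smul_eq_mul, hb]

lemma sub_φ_mem_J (p : Stmt13.Poly k) : p - φ k p ∈ J k := by
  have h : (Ideal.Quotient.mkₐ k (J k)).comp (φ k) = Ideal.Quotient.mkₐ k (J k) := by
    apply MvPolynomial.algHom_ext
    rintro (_ | i)
    · simp [φ_z]
    · have : (X (some i) : Stmt13.Poly k) ∈ J k :=
        Ideal.subset_span ⟨i, rfl⟩
      simp [φ_x, Ideal.Quotient.eq_zero_iff_mem.2 this]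
  have h2 : Ideal.Quotient.mk (J k) (φ k p) = Ideal.Quotient.mk (J k) p := by
    have := congrArg (fun f => f p) h
    simpa using this
  simpa using (Ideal.Quotient.eq.mp h2.symm)

lemma map_J : Ideal.map (Ideal.Quotient.mk (Stmt13.I k)) (J k)
    = Ideal.span (Set.range (Stmt13.x k)) := by
  rw [Ideal.map_span]
  congr 1
  rw [← Set.range_comp]
  rfl

lemma ker_eq : LinearMap.ker (LinearMap.mulLeft (Stmt13.R k) (Stmt13.z k)) =
    Ideal.span (Set.range (Stmt13.x k)) := by
  apply le_antisymm
  · intro r hr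
    obtain ⟨p, rfl⟩ := Ideal.Quotient.mk_surjective r
    have hz : Stmt13.z k * Ideal.Quotient.mk (Stmt13.I k) p = 0 := hr
    have hmem : (X none : Stmt13.Poly k) * p ∈ Stmt13.I k := by
      rw [Stmt13.z, ← map_mul] at hz
      exact Ideal.Quotient.eq_zero_iff_mem.mp hz
    have h0 : (X none : Stmt13.Poly k) * φ k p = 0 := by
      have := φ_I k hmem
      rwa [map_mul, φ_z] at this
    have hφ0 : φ k p = 0 :=
      (mul_eq_zero.mp h0).resolve_left (X_ne_zero none)
    have hpJ : p ∈ J k := by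
      have := sub_φ_mem_J k p
      rwa [hφ0, sub_zero] at this
    rw [← map_J]
    exact Ideal.mem_map_of_mem _ hpJ
  · rw [Ideal.span_le]
    rintro r ⟨i, rfl⟩
    have : Stmt13.z k * Stmt13.x k i = 0 := by
      rw [Stmt13.z, Stmt13.x, ← map_mul]
      exact Ideal.Quotient.eq_zero_iff_mem.2 (Ideal.subset_span ⟨i, rfl⟩)
    exact this

end Stmt13Aux

namespace Stmt13Aux
open MvPolynomial Stmt13
variable (k : Type) [Field k]

/-- Evaluation sending `x_N ↦ 1`, all other variables `↦ 0`. -/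
noncomputable def e (N : ℕ) : Stmt13.Poly k →ₐ[k] k :=
  aeval (fun j => if j = some N then 1 else 0)

lemma e_XN (N : ℕ) : e k N (X (some N)) = 1 := by simp [e]

lemma e_I (N : ℕ) {p : Stmt13.Poly k} (hp : p ∈ Stmt13.I k) : e k N p = 0 := by
  refine Submodule.span_induction ?_ ?_ ?_ ?_ hp
  · rintro q ⟨i, rfl⟩
    simp [e]
  · simp
  · intro a b _ _ ha hb; simp [ha, hb]
  · intro a b _ hb; simp [smul_eq_mul, hb]

lemma e_Js (N : ℕ) (s : Finset ℕ) (hN : N ∉ s) {q : Stmt13.Poly k}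
    (hq : q ∈ Ideal.span ((fun i : ℕ => (X (some i) : Stmt13.Poly k)) '' ↑s)) :
    e k N q = 0 := by
  refine Submodule.span_induction ?_ ?_ ?_ ?_ hq
  · rintro p ⟨i, hi, rfl⟩
    have : i ≠ N := fun h => hN (h ▸ hi)
    simp [e, this]
  · simp
  · intro a b _ _ ha hb; simp [ha, hb]
  · intro a b _ hb; simp [smul_eq_mul, hb]

lemma x_not_mem (N : ℕ) (s : Finset ℕ) (hN : N ∉ s) :
    Stmt13.x k N ∉ Ideal.span (Stmt13.x k '' ↑s) := by
  intro h
  have hmap : Ideal.span (Stmt13.x k '' ↑s)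
      = Ideal.map (Ideal.Quotient.mk (Stmt13.I k))
          (Ideal.span ((fun i : ℕ => (X (some i) : Stmt13.Poly k)) '' ↑s)) := by
    rw [Ideal.map_span, Set.image_image]
    rfl
  rw [hmap] at h
  obtain ⟨q, hqJ, hq⟩ :=
    (Ideal.mem_map_iff_of_surjective _ Ideal.Quotient.mk_surjective).mp h
  have hsub : q - X (some N) ∈ Stmt13.I k := Ideal.Quotient.eq.mp hq
  have := e_I k N hsub
  rw [map_sub, e_Js k N s hN hqJ, e_XN, zero_sub, neg_eq_zero] at this
  exact one_ne_zero this

lemma mem_span_finite {t : Stmt13.R k} (ht : t ∈ Ideal.span (Set.range (Stmt13.x k))) :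
    ∃ u : Finset ℕ, t ∈ Ideal.span (Stmt13.x k '' ↑u) := by
  refine Submodule.span_induction ?_ ?_ ?_ ?_ ht
  · rintro r ⟨i, rfl⟩
    exact ⟨{i}, Ideal.subset_span ⟨i, by simp, rfl⟩⟩
  · exact ⟨∅, Submodule.zero_mem _⟩
  · rintro a b _ _ ⟨u, hu⟩ ⟨v, hv⟩
    refine ⟨u ∪ v, Submodule.add_mem _ ?_ ?_⟩
    · exact Ideal.span_mono (Set.image_mono (by simp [Finset.coe_subset])) hu
    · exact Ideal.span_mono (Set.image_mono (by simp [Finset.coe_subset])) hv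
  · rintro a b _ ⟨u, hu⟩
    exact ⟨u, Submodule.smul_mem _ a hu⟩

lemma not_fg : ¬ (Ideal.span (Set.range (Stmt13.x k))).FG := by
  rintro ⟨T, hT⟩
  have H : ∀ t : {t // t ∈ T}, ∃ u : Finset ℕ,
      (t : Stmt13.R k) ∈ Ideal.span (Stmt13.x k '' ↑u) := by
    rintro ⟨t, ht⟩
    exact mem_span_finite k (hT ▸ Ideal.subset_span ht)
  choose u hu using H
  set s : Finset ℕ := T.attach.sup u with hs
  have hle : Ideal.span (Set.range (Stmt13.x k)) ≤ Ideal.span (Stmt13.x k '' ↑s) := by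
    rw [← hT, Ideal.span_le]
    intro t ht
    refine Ideal.span_mono (Set.image_mono ?_) (hu ⟨t, ht⟩)
    exact_mod_cast Finset.le_sup (f := u) (Finset.mem_attach T ⟨t, ht⟩)
  set N : ℕ := s.sup id + 1 with hN
  have hNs : N ∉ s := by
    intro h
    have h2 := Finset.le_sup (f := id) h
    simp only [id_eq, hN] at h2
    omega
  exact x_not_mem k N s hNs (hle (Ideal.subset_span ⟨N, rfl⟩))

end Stmt13Aux


/-- in `R = k[z, x₀, x₁, …] / ⟨z·xᵢ⟩`, the kernel of the `R`-linear
endomorphism "multiplication by `z`" is the ideal generated by the `xᵢ`; this ideal is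
not finitely generated as an `R`-module; and in particular `R` is not coherent (the
kernel of an `R`-linear map between finitely generated free `R`-modules need not be
finitely generated). -/
theorem not_coherent_example (k : Type) [Field k] :
    LinearMap.ker (LinearMap.mulLeft (Stmt13.R k) (Stmt13.z k)) =
        Ideal.span (Set.range (Stmt13.x k)) ∧
    ¬ (Ideal.span (Set.range (Stmt13.x k))).FG ∧
    ¬ (∀ (m n : ℕ) (f : (Fin m → Stmt13.R k) →ₗ[Stmt13.R k] (Fin n → Stmt13.R k)),
        (LinearMap.ker f).FG) := by
  refine ⟨Stmt13Aux.ker_eq k, Stmt13Aux.not_fg k, ?_⟩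
  intro h
  apply Stmt13Aux.not_fg k
  set E : (Fin 1 → Stmt13.R k) ≃ₗ[Stmt13.R k] Stmt13.R k :=
    LinearEquiv.funUnique (Fin 1) (Stmt13.R k) (Stmt13.R k) with hE
  set f : (Fin 1 → Stmt13.R k) →ₗ[Stmt13.R k] (Fin 1 → Stmt13.R k) :=
    E.symm.toLinearMap ∘ₗ (LinearMap.mulLeft (Stmt13.R k) (Stmt13.z k)) ∘ₗ E.toLinearMap
    with hf
  have hker : (LinearMap.ker f).FG := h 1 1 f
  have hkf : LinearMap.ker f = Submodule.comap E.toLinearMap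
      (LinearMap.ker (LinearMap.mulLeft (Stmt13.R k) (Stmt13.z k))) := by
    rw [hf, LinearMap.ker_comp_of_ker_eq_bot _ E.symm.ker, LinearMap.ker_comp]
  have hmap : (LinearMap.ker f).map E.toLinearMap
      = LinearMap.ker (LinearMap.mulLeft (Stmt13.R k) (Stmt13.z k)) := by
    rw [hkf]
    exact Submodule.map_comap_eq_of_surjective E.surjective _
  have := hker.map E.toLinearMap
  rw [hmap, Stmt13Aux.ker_eq k] at this
  exact this
end
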